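/- arXiv:0810.4188 — 4 statements merged into one kernel-verified Lean document; each statement's English description precedes it below -/
import Mathlib

section
/- For a random variable Z taking finitely many real values, and λ ≥ 0, ln P(Z ≥ E[Z_{λZ}] − √(2 Var[Z_{λZ}])) ≥ ln E[e^{λZ}] − λ E[Z_{λZ}] − ln 2 − λ √(2 Var[Z_{λZ}]). -/
/-- Moment generating function of a finitely supported random variable with
values `z i` and probabilities `p i`. -/
noncomputable def mgf' (n : ℕ) (p z : Fin n → ℝ) (l : ℝ) : ℝ :=
  ∑ j, p j * Real.exp (l * z j)

/-- Mean of `Z` under the exponentially tilted measure with density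
proportional to `exp (l * Z)`. -/
noncomputable def tiltMean (n : ℕ) (p z : Fin n → ℝ) (l : ℝ) : ℝ :=
  (∑ j, p j * Real.exp (l * z j) * z j) / mgf' n p z l

/-- Variance of `Z` under the exponentially tilted measure. -/
noncomputable def tiltVar (n : ℕ) (p z : Fin n → ℝ) (l : ℝ) : ℝ :=
  (∑ j, p j * Real.exp (l * z j) * (z j - tiltMean n p z l) ^ 2) / mgf' n p z l

/-- Reverse Chernoff bound:
`ln P(Z ≥ E[Z_{λZ}] − √(2 Var[Z_{λZ}])) ≥ ln E[e^{λZ}] − λ E[Z_{λZ}] − ln 2 − λ √(2 Var[Z_{λZ}])`. -/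
theorem chernoff_lower (n : ℕ) (p z : Fin n → ℝ) (hp : ∀ i, 0 ≤ p i)
    (hsum : ∑ i, p i = 1) (l : ℝ) (hl : 0 ≤ l) :
    Real.log (∑ i ∈ Finset.univ.filter
        (fun i => tiltMean n p z l - Real.sqrt (2 * tiltVar n p z l) ≤ z i), p i)
      ≥ Real.log (mgf' n p z l) - l * tiltMean n p z l - Real.log 2
        - l * Real.sqrt (2 * tiltVar n p z l) := by
  classical
  set μ := tiltMean n p z l with hμdef
  set t := Real.sqrt (2 * tiltVar n p z l) with htdef
  set M := mgf' n p z l with hMdef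
  set q : Fin n → ℝ := fun i => p i * Real.exp (l * z i) with hqdef
  have hqnn : ∀ i, 0 ≤ q i := fun i => mul_nonneg (hp i) (Real.exp_pos _).le
  have hqM : ∑ i, q i = M := rfl
  have hMpos : 0 < M := by
    obtain ⟨i, hi⟩ : ∃ i, 0 < p i := by
      by_contra h
      push_neg at h
      have hz : ∀ i, p i = 0 := fun i => le_antisymm (h i) (hp i)
      simp [hz] at hsum
    have h1 : q i ≤ ∑ j, q j :=
      Finset.single_le_sum (fun j _ => hqnn j) (Finset.mem_univ i)
    have hqi : 0 < q i := mul_pos hi (Real.exp_pos _)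
    rw [hqM] at h1
    linarith
  set V := ∑ i, q i * (z i - μ) ^ 2 with hVdef
  have hVnn : 0 ≤ V :=
    Finset.sum_nonneg fun i _ => mul_nonneg (hqnn i) (sq_nonneg _)
  have htV : tiltVar n p z l = V / M := rfl
  have h2V : 0 ≤ 2 * tiltVar n p z l := by
    rw [htV]; positivity
  have htnn : 0 ≤ t := Real.sqrt_nonneg _
  have ht2 : t ^ 2 = 2 * (V / M) := by
    rw [htdef, Real.sq_sqrt h2V, htV]
  -- Chebyshev on the tilted measure
  set Bc := Finset.univ.filter (fun i => ¬ |z i - μ| ≤ t) with hBcdef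
  have hcheb : ∑ i ∈ Bc, q i ≤ M / 2 := by
    have hterm : ∀ i ∈ Bc, q i * t ^ 2 ≤ q i * (z i - μ) ^ 2 := by
      intro i hi
      simp only [hBcdef, Finset.mem_filter, not_le] at hi
      have habs : t ^ 2 ≤ (z i - μ) ^ 2 := by
        rw [← sq_abs (z i - μ)]
        exact pow_le_pow_left₀ htnn hi.2.le 2
      exact mul_le_mul_of_nonneg_left habs (hqnn i)
    have hsum1 : (∑ i ∈ Bc, q i) * t ^ 2 ≤ ∑ i ∈ Bc, q i * (z i - μ) ^ 2 := by
      rw [Finset.sum_mul]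
      exact Finset.sum_le_sum hterm
    have hsum2 : ∑ i ∈ Bc, q i * (z i - μ) ^ 2 ≤ V :=
      Finset.sum_le_sum_of_subset_of_nonneg (Finset.filter_subset _ _)
        (fun i _ _ => mul_nonneg (hqnn i) (sq_nonneg _))
    have hScnn : 0 ≤ ∑ i ∈ Bc, q i := Finset.sum_nonneg fun i _ => hqnn i
    rcases eq_or_lt_of_le hVnn with hV0 | hVpos
    · -- V = 0 : each q i on Bc is 0
      have hall : ∀ i ∈ Bc, q i = 0 := by
        intro i hi
        simp only [hBcdef, Finset.mem_filter, not_le] at hi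
        have h1 : q i * (z i - μ) ^ 2 ≤ V :=
          Finset.single_le_sum (f := fun j => q j * (z j - μ) ^ 2)
            (fun j _ => mul_nonneg (hqnn j) (sq_nonneg _)) (Finset.mem_univ i)
        have h2 : 0 < (z i - μ) ^ 2 := by
          have habs : 0 < |z i - μ| := lt_of_le_of_lt htnn hi.2
          rw [← sq_abs]
          exact pow_pos habs 2
        nlinarith [hqnn i]
      rw [Finset.sum_eq_zero hall]
      linarith
    · have hM2 : (∑ i ∈ Bc, q i) * (2 * (V / M)) ≤ V := by
        rw [← ht2]; exact le_trans hsum1 hsum2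
      have hM2' : (∑ i ∈ Bc, q i) * (2 * V) ≤ V * M := by
        have h := mul_le_mul_of_nonneg_right hM2 hMpos.le
        have heq' : (∑ i ∈ Bc, q i) * (2 * (V / M)) * M
            = (∑ i ∈ Bc, q i) * (2 * V) := by
          field_simp
        rw [heq'] at h
        exact h
      nlinarith [hM2', hVpos, hMpos, hScnn]
  set B := Finset.univ.filter (fun i => |z i - μ| ≤ t) with hBdef
  have hB : M / 2 ≤ ∑ i ∈ B, q i := by
    have := Finset.sum_filter_add_sum_filter_not Finset.univ
      (fun i => |z i - μ| ≤ t) q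
    rw [hqM] at this
    linarith
  -- density ratio bound on B
  have hBp : Real.exp (-(l * (μ + t))) * (M / 2) ≤ ∑ i ∈ B, p i := by
    have hterm : ∀ i ∈ B, q i * Real.exp (-(l * (μ + t))) ≤ p i := by
      intro i hi
      simp only [hBdef, Finset.mem_filter] at hi
      have hz : z i ≤ μ + t := by
        have := abs_le.mp hi.2
        linarith
      have hp_eq : p i = q i * Real.exp (-(l * z i)) := by
        simp only [hqdef]
        rw [mul_assoc, ← Real.exp_add]
        simp
      rw [hp_eq]
      apply mul_le_mul_of_nonneg_left _ (hqnn i)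
      apply Real.exp_le_exp.mpr
      nlinarith
    calc Real.exp (-(l * (μ + t))) * (M / 2)
        ≤ Real.exp (-(l * (μ + t))) * ∑ i ∈ B, q i := by
          apply mul_le_mul_of_nonneg_left hB (Real.exp_pos _).le
      _ = ∑ i ∈ B, q i * Real.exp (-(l * (μ + t))) := by
          rw [Finset.mul_sum]; congr 1; ext i; ring
      _ ≤ ∑ i ∈ B, p i := Finset.sum_le_sum hterm
  -- B ⊆ A
  have hBA : ∑ i ∈ B, p i ≤ ∑ i ∈ Finset.univ.filter (fun i => μ - t ≤ z i), p i := by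
    apply Finset.sum_le_sum_of_subset_of_nonneg
    · intro i hi
      simp only [hBdef, Finset.mem_filter] at hi ⊢
      refine ⟨hi.1, ?_⟩
      have := abs_le.mp hi.2
      linarith
    · exact fun i _ _ => hp i
  have hlow : Real.exp (-(l * (μ + t))) * (M / 2)
      ≤ ∑ i ∈ Finset.univ.filter (fun i => μ - t ≤ z i), p i :=
    le_trans hBp hBA
  have hpos : 0 < Real.exp (-(l * (μ + t))) * (M / 2) := by positivity
  have hlog := Real.log_le_log hpos hlow
  have heq : Real.log (Real.exp (-(l * (μ + t))) * (M / 2))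
      = Real.log M - l * μ - Real.log 2 - l * t := by
    rw [Real.log_mul (Real.exp_ne_zero _) (by positivity),
      Real.log_exp, Real.log_div hMpos.ne' two_ne_zero]
    ring
  rw [heq] at hlog
  exact hlog
end

section
/- The two dual characterizations of the bucketing forest information function agree: min over probability vectors (q_0,…,q_b) with Σ_{j=0}^{b} q_j = 1, q_j > 0, and Σ_{j=0}^{b−1} q_j / p_{j*}^λ ≤ 1, of Σ_{j=0}^{b} p_j ln(p_j/q_j), equals max over r ∈ [0,1] of Σ_{j=0}^{b} p_j ln(1 − r + r·[j≠b]/p_{j*}^λ), with the extrema related by q_j = p_j / (1 − r + r·[j≠b]/p_{j*}^λ). -/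
/-- The inner function of the bucketing forest information:
`r ↦ Σ_{j=0}^{b} p_j ln(1 − r + r·[j≠b]/p_{j*}^λ)`, where `[j≠b] = 1` iff `j < b`. -/
noncomputable def bfInner (b : ℕ) (p : Fin (b + 1) → ℝ) (pstar : Fin b → ℝ)
    (l r : ℝ) : ℝ :=
  ∑ j : Fin (b + 1), p j *
    Real.log (1 - r + r * (if h : (j : ℕ) < b then (pstar ⟨j, h⟩ ^ l)⁻¹ else 0))

/-- The `q` obtained from `r` via `q_j = p_j / (1 − r + r·[j≠b]/p_{j*}^λ)`. -/
noncomputable def dualQ (b : ℕ) (p : Fin (b + 1) → ℝ) (pstar : Fin b → ℝ)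
    (l r : ℝ) (j : Fin (b + 1)) : ℝ :=
  p j / (1 - r + r * (if h : (j : ℕ) < b then (pstar ⟨j, h⟩ ^ l)⁻¹ else 0))

noncomputable def bfC (b : ℕ) (pstar : Fin b → ℝ) (l : ℝ) (j : Fin (b + 1)) : ℝ :=
  if h : (j : ℕ) < b then (pstar ⟨j, h⟩ ^ l)⁻¹ else 0

noncomputable def bfA (b : ℕ) (pstar : Fin b → ℝ) (l r : ℝ) (j : Fin (b + 1)) : ℝ :=
  1 - r + r * bfC b pstar l j

lemma bfInner_eq (b : ℕ) (p : Fin (b + 1) → ℝ) (pstar : Fin b → ℝ) (l r : ℝ) :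
    bfInner b p pstar l r = ∑ j, p j * Real.log (bfA b pstar l r j) := rfl

lemma dualQ_eq (b : ℕ) (p : Fin (b + 1) → ℝ) (pstar : Fin b → ℝ) (l r : ℝ) (j : Fin (b+1)) :
    dualQ b p pstar l r j = p j / bfA b pstar l r j := rfl

section main

variable (b : ℕ) (pstar : Fin b → ℝ) (l : ℝ)

lemma bfC_nonneg (hps : ∀ j, pstar j ∈ Set.Ioo (0 : ℝ) 1) (j : Fin (b+1)) :
    0 ≤ bfC b pstar l j := by
  unfold bfC
  split
  · exact le_of_lt (inv_pos.2 (Real.rpow_pos_of_pos (hps _).1 l))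
  · exact le_refl 0

lemma bfC_ge_one (hps : ∀ j, pstar j ∈ Set.Ioo (0 : ℝ) 1) (hl : 0 ≤ l)
    (j : Fin (b+1)) (hj : (j : ℕ) < b) : 1 ≤ bfC b pstar l j := by
  unfold bfC
  rw [dif_pos hj]
  rw [one_le_inv_iff₀]
  exact ⟨Real.rpow_pos_of_pos (hps _).1 l,
    Real.rpow_le_one (le_of_lt (hps _).1) (le_of_lt (hps _).2) hl⟩

lemma bfA_pos (hps : ∀ j, pstar j ∈ Set.Ioo (0 : ℝ) 1)
    {r : ℝ} (hr : r ∈ Set.Ico (0:ℝ) 1) (j : Fin (b+1)) : 0 < bfA b pstar l r j := by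
  have h1 : 0 < 1 - r := by linarith [hr.2]
  have h2 : 0 ≤ r * bfC b pstar l j :=
    mul_nonneg hr.1 (bfC_nonneg b pstar l hps j)
  unfold bfA; linarith

lemma bfC_last : bfC b pstar l (Fin.last b) = 0 := by
  unfold bfC
  rw [dif_neg]
  simp [Fin.last]

lemma bfC_castSucc (j : Fin b) :
    bfC b pstar l j.castSucc = (pstar j ^ l)⁻¹ := by
  have hj : ((j.castSucc : Fin (b+1)) : ℕ) < b := by simpa using j.isLt
  unfold bfC
  rw [dif_pos hj]
  have he : (⟨((j.castSucc : Fin (b+1)) : ℕ), hj⟩ : Fin b) = j := by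
    ext; simp
  rw [he]

end main

/-- Duality for the bucketing forest information: the minimum of
`Σ_j p_j ln(p_j/q_j)` over feasible probability vectors `q` equals the maximum
over `r` of `Σ_j p_j ln(1 − r + r·[j≠b]/p_{j*}^λ)`, with the two extrema
related by `q_j = p_j / (1 − r + r·[j≠b]/p_{j*}^λ)`. -/
theorem bfInfo_duality (b : ℕ) (hb : 1 ≤ b) (p : Fin (b + 1) → ℝ)
    (pstar : Fin b → ℝ) (hp : ∀ j, 0 < p j) (hsum : ∑ j, p j = 1)
    (hps : ∀ j, pstar j ∈ Set.Ioo (0 : ℝ) 1) (l : ℝ) (hl : 0 ≤ l) :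
    ∃ r ∈ Set.Ico (0 : ℝ) 1,
      (∀ r' ∈ Set.Ico (0 : ℝ) 1, bfInner b p pstar l r' ≤ bfInner b p pstar l r) ∧
      (∀ j, 0 < dualQ b p pstar l r j) ∧
      (∑ j, dualQ b p pstar l r j) = 1 ∧
      (∑ j : Fin b, dualQ b p pstar l r j.castSucc / pstar j ^ l) ≤ 1 ∧
      (∑ j, p j * Real.log (p j / dualQ b p pstar l r j)) = bfInner b p pstar l r ∧
      ∀ q : Fin (b + 1) → ℝ, (∀ j, 0 < q j) → (∑ j, q j) = 1 →
        (∑ j : Fin b, q j.castSucc / pstar j ^ l) ≤ 1 →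
        bfInner b p pstar l r ≤ ∑ j, p j * Real.log (p j / q j) := by
  classical
  set c : Fin (b+1) → ℝ := bfC b pstar l with hc
  set A : ℝ → Fin (b+1) → ℝ := bfA b pstar l with hA
  have hcnn : ∀ j, 0 ≤ c j := bfC_nonneg b pstar l hps
  have hApos : ∀ {r : ℝ}, r ∈ Set.Ico (0:ℝ) 1 → ∀ j, 0 < A r j :=
    fun hr j => bfA_pos b pstar l hps hr j
  have hcsum : ∀ v : Fin (b+1) → ℝ,
      (∑ j, v j * c j) = ∑ j : Fin b, v j.castSucc / pstar j ^ l := by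
    intro v
    rw [Fin.sum_univ_castSucc (f := fun j => v j * c j)]
    rw [hc, bfC_last, mul_zero, add_zero]
    refine Finset.sum_congr rfl fun j _ => ?_
    rw [bfC_castSucc, div_eq_mul_inv]
  -- core lemma: given the two sum conditions, everything follows
  suffices key : ∀ r ∈ Set.Ico (0:ℝ) 1,
      (∑ j, p j / A r j) = 1 → (∑ j, p j * c j / A r j) ≤ 1 →
      (∀ r' ∈ Set.Ico (0 : ℝ) 1, bfInner b p pstar l r' ≤ bfInner b p pstar l r) ∧
      (∀ j, 0 < dualQ b p pstar l r j) ∧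
      (∑ j, dualQ b p pstar l r j) = 1 ∧
      (∑ j : Fin b, dualQ b p pstar l r j.castSucc / pstar j ^ l) ≤ 1 ∧
      (∑ j, p j * Real.log (p j / dualQ b p pstar l r j)) = bfInner b p pstar l r ∧
      ∀ q : Fin (b + 1) → ℝ, (∀ j, 0 < q j) → (∑ j, q j) = 1 →
        (∑ j : Fin b, q j.castSucc / pstar j ^ l) ≤ 1 →
        bfInner b p pstar l r ≤ ∑ j, p j * Real.log (p j / q j) by
    -- find such an r
    by_cases hS : (∑ j, p j * c j) ≤ 1
    · refine ⟨0, ⟨le_refl 0, one_pos⟩, key 0 ⟨le_refl 0, one_pos⟩ ?_ ?_⟩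
      · simpa [hA, bfA] using hsum
      · simpa [hA, bfA, hc] using hS
    · push_neg at hS
      set S : ℝ := ∑ j, p j * c j with hSdef
      set F : ℝ → ℝ := fun r => ∑ j, p j * (c j - 1) / A r j with hF
      have hplast : p (Fin.last b) < 1 := by
        rw [← hsum]
        refine Finset.single_lt_sum (i := Fin.last b) (j := (0 : Fin (b+1))) ?_
          (Finset.mem_univ _) (Finset.mem_univ _) (hp 0) (fun k _ _ => le_of_lt (hp k))
        intro h
        have hv : (0 : ℕ) = b := congrArg Fin.val h
        omega
      set r₁ : ℝ := 1 - p (Fin.last b) / (S + 1) with hr₁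
      have hSpos : 0 < S + 1 := by linarith
      have hfrac_pos : 0 < p (Fin.last b) / (S + 1) := div_pos (hp _) hSpos
      have hfrac_lt : p (Fin.last b) / (S + 1) < 1 := by
        rw [div_lt_one hSpos]; linarith [hp (Fin.last b)]
      have hr₁mem : r₁ ∈ Set.Ico (0:ℝ) 1 := by
        constructor
        · simp only [hr₁]; linarith
        · simp only [hr₁]; linarith
      have hr₁pos : 0 < r₁ := by simp only [hr₁]; linarith
      have hsub : Set.Icc (0:ℝ) r₁ ⊆ Set.Ico (0:ℝ) 1 :=
        fun x hx => ⟨hx.1, lt_of_le_of_lt hx.2 hr₁mem.2⟩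
      -- F 0 > 0
      have hF0 : F 0 = S - 1 := by
        have he : F 0 = ∑ j, (p j * c j - p j) := by
          simp only [hF, hA, bfA]
          refine Finset.sum_congr rfl fun j _ => ?_
          rw [sub_zero, zero_mul, add_zero, div_one]
          ring
        rw [he, Finset.sum_sub_distrib, hsum, hSdef]
      -- F r₁ ≤ -1 < 0
      have hFr₁ : F r₁ ≤ -1 := by
        have hsplit : F r₁ = (∑ j : Fin b, p j.castSucc * (c j.castSucc - 1) / A r₁ j.castSucc)
            + p (Fin.last b) * (c (Fin.last b) - 1) / A r₁ (Fin.last b) := by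
          simp only [hF]
          exact Fin.sum_univ_castSucc _
        have hlastA : A r₁ (Fin.last b) = p (Fin.last b) / (S + 1) := by
          simp [hA, bfA, hc, bfC_last, hr₁]
        have hlastterm : p (Fin.last b) * (c (Fin.last b) - 1) / A r₁ (Fin.last b)
            = -(S + 1) := by
          rw [hlastA, hc, bfC_last]
          rw [div_eq_iff (ne_of_gt (div_pos (hp _) hSpos))]
          field_simp
          ring
        have hbound : (∑ j : Fin b, p j.castSucc * (c j.castSucc - 1) / A r₁ j.castSucc) ≤ S := by
          have h1 : ∀ j : Fin b, p j.castSucc * (c j.castSucc - 1) / A r₁ j.castSucc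
              ≤ p j.castSucc * c j.castSucc := by
            intro j
            have hjlt : ((j.castSucc : Fin (b+1)) : ℕ) < b := by simpa using j.isLt
            have hc1 : 1 ≤ c j.castSucc := bfC_ge_one b pstar l hps hl _ hjlt
            have hA1 : 1 ≤ A r₁ j.castSucc := by
              have hAe : A r₁ j.castSucc = 1 - r₁ + r₁ * c j.castSucc := rfl
              nlinarith [hr₁mem.1, hr₁mem.2]
            calc p j.castSucc * (c j.castSucc - 1) / A r₁ j.castSucc
                ≤ p j.castSucc * (c j.castSucc - 1) :=
                  div_le_self (by nlinarith [hp j.castSucc]) hA1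
              _ ≤ p j.castSucc * c j.castSucc := by nlinarith [hp j.castSucc]
          calc (∑ j : Fin b, p j.castSucc * (c j.castSucc - 1) / A r₁ j.castSucc)
              ≤ ∑ j : Fin b, p j.castSucc * c j.castSucc := Finset.sum_le_sum (fun j _ => h1 j)
            _ ≤ S := by
                rw [hSdef, Fin.sum_univ_castSucc (f := fun j => p j * c j)]
                have : 0 ≤ p (Fin.last b) * c (Fin.last b) :=
                  mul_nonneg (le_of_lt (hp _)) (hcnn _)
                linarith
        rw [hsplit, hlastterm]; linarith
      -- IVT
      have hcont : ContinuousOn F (Set.Icc 0 r₁) := by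
        apply continuousOn_finset_sum
        intro j _
        apply ContinuousOn.div continuousOn_const
        · have hAe : (fun r => A r j) = fun r => 1 - r + r * c j := rfl
          rw [hAe]
          fun_prop
        · exact fun x hx => ne_of_gt (hApos (hsub hx) j)
      have hivt : (0:ℝ) ∈ F '' Set.Icc 0 r₁ := by
        apply intermediate_value_Icc' (le_of_lt hr₁pos) hcont
        constructor
        · linarith
        · rw [hF0]; linarith
      obtain ⟨r, hrm, hFr⟩ := hivt
      have hrIco : r ∈ Set.Ico (0:ℝ) 1 := hsub hrm
      -- from F r = 0 deduce the two equalities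
      have hTT : (∑ j, p j * c j / A r j) = ∑ j, p j / A r j := by
        have : (∑ j, p j * c j / A r j) - (∑ j, p j / A r j) = F r := by
          rw [hF, ← Finset.sum_sub_distrib]
          refine Finset.sum_congr rfl fun j _ => ?_
          ring
        rw [hFr] at this
        linarith
      have hid : (1-r) * (∑ j, p j / A r j) + r * (∑ j, p j * c j / A r j) = 1 := by
        have he : ∀ j : Fin (b+1), (1-r) * (p j / A r j) + r * (p j * c j / A r j) = p j := by
          intro j
          have hAne : A r j ≠ 0 := ne_of_gt (hApos hrIco j)
          have hAe : A r j = 1 - r + r * c j := rfl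
          field_simp
          rw [hAe]
        rw [Finset.mul_sum, Finset.mul_sum, ← Finset.sum_add_distrib,
          Finset.sum_congr rfl (fun j _ => he j), hsum]
      have hT1 : (∑ j, p j / A r j) = 1 := by
        rw [hTT] at hid; linarith [hid]
      exact ⟨r, hrIco, key r hrIco hT1 (by rw [hTT, hT1])⟩
  -- now prove key
  intro r hr h1 h2
  have hAr : ∀ j, 0 < A r j := hApos hr
  have hmax : ∀ r' ∈ Set.Ico (0:ℝ) 1, bfInner b p pstar l r' ≤ bfInner b p pstar l r := by
    intro r' hr'
    rw [bfInner_eq, bfInner_eq]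
    have hstep : ∀ j : Fin (b+1), p j * Real.log (bfA b pstar l r' j)
        ≤ p j * Real.log (bfA b pstar l r j) + p j * (A r' j / A r j) - p j := by
      intro j
      have hA'j : 0 < A r' j := hApos hr' j
      have hAj : 0 < A r j := hAr j
      have hlog : Real.log (A r' j / A r j) ≤ A r' j / A r j - 1 :=
        Real.log_le_sub_one_of_pos (div_pos hA'j hAj)
      rw [Real.log_div (ne_of_gt hA'j) (ne_of_gt hAj)] at hlog
      have hAeq : bfA b pstar l r' j = A r' j := rfl
      have hAeq2 : bfA b pstar l r j = A r j := rfl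
      rw [hAeq, hAeq2]
      nlinarith [le_of_lt (hp j)]
    have hexp : ∑ j, p j * (A r' j / A r j)
        = (1-r') * (∑ j, p j / A r j) + r' * (∑ j, p j * c j / A r j) := by
      rw [Finset.mul_sum, Finset.mul_sum, ← Finset.sum_add_distrib]
      refine Finset.sum_congr rfl fun j _ => ?_
      have hAne : A r j ≠ 0 := ne_of_gt (hAr j)
      have hAe : A r' j = 1 - r' + r' * c j := rfl
      field_simp
      rw [hAe]
    have hle1 : ∑ j, p j * (A r' j / A r j) ≤ 1 := by
      rw [hexp, h1, mul_one]
      nlinarith [hr'.1, hr'.2]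
    calc ∑ j, p j * Real.log (bfA b pstar l r' j)
        ≤ ∑ j, (p j * Real.log (bfA b pstar l r j) + p j * (A r' j / A r j) - p j) :=
          Finset.sum_le_sum (fun j _ => hstep j)
      _ = (∑ j, p j * Real.log (bfA b pstar l r j)) + (∑ j, p j * (A r' j / A r j))
          - (∑ j, p j) := by
          rw [Finset.sum_sub_distrib, Finset.sum_add_distrib]
      _ ≤ ∑ j, p j * Real.log (bfA b pstar l r j) := by
          rw [hsum]; linarith
  have hqpos : ∀ j, 0 < dualQ b p pstar l r j := by
    intro j
    rw [dualQ_eq]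
    exact div_pos (hp j) (hAr j)
  have hqsum : (∑ j, dualQ b p pstar l r j) = 1 := by
    simp only [dualQ_eq]
    exact h1
  have hqconstraint : (∑ j : Fin b, dualQ b p pstar l r j.castSucc / pstar j ^ l) ≤ 1 := by
    have heq : (∑ j : Fin b, dualQ b p pstar l r j.castSucc / pstar j ^ l)
        = ∑ j, p j * c j / A r j := by
      rw [← hcsum (dualQ b p pstar l r)]
      refine Finset.sum_congr rfl fun j _ => ?_
      rw [dualQ_eq, div_mul_eq_mul_div]
    rw [heq]; exact h2
  have hobj : (∑ j, p j * Real.log (p j / dualQ b p pstar l r j)) = bfInner b p pstar l r := by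
    rw [bfInner_eq]
    refine Finset.sum_congr rfl fun j _ => ?_
    congr 1
    rw [dualQ_eq, div_div_eq_mul_div, mul_comm, mul_div_assoc, div_self (ne_of_gt (hp j)),
      mul_one]
  refine ⟨hmax, hqpos, hqsum, hqconstraint, hobj, ?_⟩
  -- lower bound
  intro q hq hq1 hq2
  rw [bfInner_eq]
  have hqA : ∑ j, q j * A r j ≤ 1 := by
    have hqc : (∑ j, q j * c j) ≤ 1 := by rw [hcsum q]; exact hq2
    have hqc0 : 0 ≤ ∑ j, q j * c j :=
      Finset.sum_nonneg fun j _ => mul_nonneg (le_of_lt (hq j)) (hcnn j)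
    have hexp : ∑ j, q j * A r j = (1-r) * (∑ j, q j) + r * (∑ j, q j * c j) := by
      rw [Finset.mul_sum, Finset.mul_sum, ← Finset.sum_add_distrib]
      refine Finset.sum_congr rfl fun j _ => ?_
      have hAe : A r j = 1 - r + r * c j := rfl
      rw [hAe]; ring
    rw [hexp, hq1, mul_one]
    nlinarith [hr.1, hr.2]
  have hstep : ∀ j : Fin (b+1), p j * Real.log (bfA b pstar l r j)
      ≤ p j * Real.log (p j / q j) + q j * A r j - p j := by
    intro j
    have hAj : 0 < A r j := hAr j
    have hpos : 0 < A r j * q j / p j := div_pos (mul_pos hAj (hq j)) (hp j)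
    have hlog : Real.log (A r j * q j / p j) ≤ A r j * q j / p j - 1 :=
      Real.log_le_sub_one_of_pos hpos
    rw [Real.log_div (ne_of_gt (mul_pos hAj (hq j))) (ne_of_gt (hp j)),
      Real.log_mul (ne_of_gt hAj) (ne_of_gt (hq j))] at hlog
    rw [Real.log_div (ne_of_gt (hp j)) (ne_of_gt (hq j))]
    have hcancel : p j * (A r j * q j / p j) = A r j * q j := by
      rw [mul_comm, div_mul_eq_mul_div, mul_div_assoc, div_self (ne_of_gt (hp j)), mul_one]
    have hAeq : bfA b pstar l r j = A r j := rfl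
    rw [hAeq]
    nlinarith [hp j]
  calc ∑ j, p j * Real.log (bfA b pstar l r j)
      ≤ ∑ j, (p j * Real.log (p j / q j) + q j * A r j - p j) :=
        Finset.sum_le_sum (fun j _ => hstep j)
    _ = (∑ j, p j * Real.log (p j / q j)) + (∑ j, q j * A r j) - (∑ j, p j) := by
        rw [Finset.sum_sub_distrib, Finset.sum_add_distrib]
    _ ≤ ∑ j, p j * Real.log (p j / q j) := by
        rw [hsum]; linarith
end

section
/- Assume the independent data model with coordinates i = 1,…,d, diagonal probabilities p_{i,j} ≥ 0 (j = 0,…,b−1) and marginals p_{i,j*} ∈ (0,1). The success probability P of any nonempty bucketing tree all of whose leaves have probability at most 1/N satisfies P ≤ N^{−λ} · Π_{i=1}^{d} max(1, Σ_{j=0}^{b−1} p_{i,j} / p_{i,j*}^λ) for every λ ≥ 0. -/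
/-- A bucketing tree: either a leaf (compare all pairs in the bucket), or pick a
coordinate and split the data into `b` parts according to its value. -/
inductive BTree (b d : ℕ) : Type where
  | leaf : BTree b d
  | node (i : Fin d) (c : Fin b → BTree b d) : BTree b d

/-- Success probability of a bucketing tree: a node on coordinate `i` succeeds
with the special pair agreeing with value `j` (probability `p i j`) and the
corresponding subtree succeeding. -/
noncomputable def succProb {b d : ℕ} (p : Fin d → Fin b → ℝ) : BTree b d → ℝ
  | .leaf => 1
  | .node i c => ∑ j, p i j * succProb p (c j)

/-- All leaves of the tree have (marginal) probability at most `1/N`, where `q`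
is the probability accumulated so far along the path. -/
def smallLeaves {b d : ℕ} (pstar : Fin d → Fin b → ℝ) (N : ℝ) : ℝ → BTree b d → Prop
  | q, .leaf => q ≤ 1 / N
  | q, .node i c => ∀ j, smallLeaves pstar N (q * pstar i j) (c j)

/-- Each coordinate is split at most once along any root-to-leaf path. -/
def validOn {b d : ℕ} : Finset (Fin d) → BTree b d → Prop
  | _, .leaf => True
  | S, .node i c => i ∈ S ∧ ∀ j, validOn (S.erase i) (c j)

theorem bucketing_aux {b d : ℕ} (p pstar : Fin d → Fin b → ℝ)
    (hp : ∀ i j, 0 ≤ p i j) (hps : ∀ i j, pstar i j ∈ Set.Ioo (0 : ℝ) 1)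
    (N : ℝ) (hN : 0 < N) (l : ℝ) (hl : 0 ≤ l) (t : BTree b d) :
    ∀ (S : Finset (Fin d)) (q : ℝ), 0 < q → validOn S t → smallLeaves pstar N q t →
    succProb p t ≤ (N * q) ^ (-l) * ∏ i ∈ S, max 1 (∑ j, p i j / pstar i j ^ l) := by
  induction t with
  | leaf =>
    intro S q hq _ hs
    simp only [smallLeaves] at hs
    simp only [succProb]
    have h1 : (1:ℝ) ≤ (N*q) ^ (-l) := by
      apply Real.one_le_rpow_of_pos_of_le_one_of_nonpos (by positivity)
      · rw [le_div_iff₀ hN] at hs; nlinarith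
      · linarith
    have h2 : (1:ℝ) ≤ ∏ i ∈ S, max 1 (∑ j, p i j / pstar i j ^ l) := by
      have := Finset.prod_le_prod (s := S) (f := fun _ => (1:ℝ))
        (g := fun i => max 1 (∑ j, p i j / pstar i j ^ l))
        (fun _ _ => zero_le_one) (fun i _ => le_max_left _ _)
      simpa using this
    nlinarith
  | node i c ih =>
    intro S q hq hv hs
    obtain ⟨hiS, hvc⟩ := hv
    simp only [succProb]
    have hps0 : ∀ j, 0 < pstar i j := fun j => (hps i j).1
    have hprodnn : (0:ℝ) ≤ ∏ i' ∈ S.erase i, max 1 (∑ j, p i' j / pstar i' j ^ l) :=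
      Finset.prod_nonneg fun i' _ => le_trans zero_le_one (le_max_left _ _)
    have key : ∀ j, p i j * succProb p (c j) ≤
        (N*q)^(-l) * (p i j / pstar i j ^ l) *
          ∏ i' ∈ S.erase i, max 1 (∑ j, p i' j / pstar i' j ^ l) := by
      intro j
      have h1 := ih j (S.erase i) (q * pstar i j) (mul_pos hq (hps0 j)) (hvc j) (hs j)
      have h2 : (N*(q*pstar i j))^(-l) = (N*q)^(-l) * (pstar i j)^(-l) := by
        rw [← mul_assoc, Real.mul_rpow (by positivity) (hps0 j).le]
      have h3 : p i j * succProb p (c j) ≤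
          p i j * ((N*q)^(-l) * (pstar i j)^(-l) *
            ∏ i' ∈ S.erase i, max 1 (∑ j, p i' j / pstar i' j ^ l)) := by
        apply mul_le_mul_of_nonneg_left _ (hp i j)
        rw [← h2]; exact h1
      refine h3.trans (le_of_eq ?_)
      rw [Real.rpow_neg (hps0 j).le, div_eq_mul_inv]
      ring
    calc ∑ j, p i j * succProb p (c j)
        ≤ ∑ j, (N*q)^(-l) * (p i j / pstar i j ^ l) *
            ∏ i' ∈ S.erase i, max 1 (∑ j, p i' j / pstar i' j ^ l) :=
          Finset.sum_le_sum fun j _ => key j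
      _ = (N*q)^(-l) * (∑ j, p i j / pstar i j ^ l) *
            ∏ i' ∈ S.erase i, max 1 (∑ j, p i' j / pstar i' j ^ l) := by
          rw [← Finset.sum_mul, ← Finset.mul_sum]
      _ ≤ (N*q)^(-l) * max 1 (∑ j, p i j / pstar i j ^ l) *
            ∏ i' ∈ S.erase i, max 1 (∑ j, p i' j / pstar i' j ^ l) := by
          apply mul_le_mul_of_nonneg_right
            (mul_le_mul_of_nonneg_left (le_max_right _ _) (by positivity)) hprodnn
      _ = (N*q)^(-l) * ∏ i' ∈ S, max 1 (∑ j, p i' j / pstar i' j ^ l) := by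
          rw [mul_assoc, ← Finset.mul_prod_erase _ _ hiS]

/-- The success probability of any nonempty bucketing tree all of whose leaves
have probability at most `1/N` is at most
`N^{−λ} Π_i max(1, Σ_j p_{i,j}/p_{i,j*}^λ)` for every `λ ≥ 0`. -/
theorem bucketing_tree_upper {b d : ℕ} (p pstar : Fin d → Fin b → ℝ)
    (hp : ∀ i j, 0 ≤ p i j) (hps : ∀ i j, pstar i j ∈ Set.Ioo (0 : ℝ) 1)
    (N : ℝ) (hN : 0 < N) (t : BTree b d)
    (hvalid : validOn Finset.univ t) (hsmall : smallLeaves pstar N 1 t)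
    (l : ℝ) (hl : 0 ≤ l) :
    succProb p t ≤ N ^ (-l) * ∏ i, max 1 (∑ j, p i j / pstar i j ^ l) := by
  have := bucketing_aux p pstar hp hps N hN l hl t Finset.univ 1 one_pos hvalid hsmall
  simpa using this
end

section
/- Assume the independent data model. If a bucketing forest contains T trees, has success probability S > 0, and all leaves have probability at most 1/N, then for every λ ≥ 0: ln T ≥ λ ln N + ln(S/2) − √((4/S) Σ_{i=1}^{d} V(P_i, λ)) − Σ_{i=1}^{d} F(P_i, λ), where F(P_i, λ) = Σ_{j=0}^{b} p_{i,j} ln(p_{i,j}/q_{i,j}) for the minimizing q's in the definition of the bucketing forest information, and V(P_i, λ) = Σ_{j=0}^{b} p_{i,j}(ln(p_{i,j}/q_{i,j}) − Σ_k p_{i,k} ln(p_{i,k}/q_{i,k}))². -/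
open Finset

private lemma sum_pi_prod {b d : ℕ} (g : Fin d → Fin (b + 1) → ℝ) :
    ∑ y : Fin d → Fin (b + 1), ∏ i, g i (y i) = ∏ i, ∑ j, g i j :=
  (Fintype.prod_sum g).symm

private lemma exp_one {b d : ℕ} (p : Fin d → Fin (b + 1) → ℝ)
    (hpsum : ∀ i, ∑ j, p i j = 1) (i : Fin d) (f : Fin (b + 1) → ℝ) :
    ∑ y : Fin d → Fin (b + 1), (∏ m, p m (y m)) * f (y i) = ∑ j, p i j * f j := by
  have h1 : ∀ y : Fin d → Fin (b + 1),
      (∏ m, p m (y m)) * f (y i) = ∏ m, (p m (y m) * (if m = i then f (y m) else 1)) := by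
    intro y
    rw [Finset.prod_mul_distrib, Fintype.prod_ite_eq' i (fun m => f (y m))]
  simp_rw [h1]
  rw [sum_pi_prod (fun m j => p m j * if m = i then f j else 1)]
  have h2 : ∀ m, (∑ j, p m j * (if m = i then f j else 1))
      = (if m = i then ∑ j, p i j * f j else 1) := by
    intro m
    by_cases h : m = i
    · subst h; simp
    · simp [h, hpsum m]
  simp_rw [h2]
  rw [Fintype.prod_ite_eq' i (fun _ => ∑ j, p i j * f j)]

private lemma exp_two {b d : ℕ} (p : Fin d → Fin (b + 1) → ℝ)
    (hpsum : ∀ i, ∑ j, p i j = 1) {i k : Fin d} (hik : i ≠ k)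
    (f g : Fin (b + 1) → ℝ) :
    ∑ y : Fin d → Fin (b + 1), (∏ m, p m (y m)) * (f (y i) * g (y k))
      = (∑ j, p i j * f j) * (∑ j, p k j * g j) := by
  have h1 : ∀ y : Fin d → Fin (b + 1),
      (∏ m, p m (y m)) * (f (y i) * g (y k))
        = ∏ m, (p m (y m) * ((if m = i then f (y m) else 1) * (if m = k then g (y m) else 1))) := by
    intro y
    simp_rw [Finset.prod_mul_distrib, Fintype.prod_ite_eq' i (fun m => f (y m)),
      Fintype.prod_ite_eq' k (fun m => g (y m))]
  simp_rw [h1]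
  rw [sum_pi_prod (fun m j => p m j * ((if m = i then f j else 1) * (if m = k then g j else 1)))]
  have h2 : ∀ m, (∑ j, p m j * ((if m = i then f j else 1) * (if m = k then g j else 1)))
      = (if m = i then ∑ j, p i j * f j else 1) * (if m = k then ∑ j, p k j * g j else 1) := by
    intro m
    by_cases h : m = i
    · subst h; simp [hik]
    · by_cases h' : m = k
      · subst h'; simp [h]
      · simp [h, h', hpsum m]
  simp_rw [h2]
  rw [Finset.prod_mul_distrib, Fintype.prod_ite_eq' i (fun _ => ∑ j, p i j * f j),
    Fintype.prod_ite_eq' k (fun _ => ∑ j, p k j * g j)]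

private lemma var_sum {b d : ℕ} (p : Fin d → Fin (b + 1) → ℝ)
    (hpsum : ∀ i, ∑ j, p i j = 1) (c : Fin d → Fin (b + 1) → ℝ)
    (hc : ∀ i, ∑ j, p i j * c i j = 0) :
    ∑ y : Fin d → Fin (b + 1), (∏ m, p m (y m)) * (∑ i, c i (y i)) ^ 2
      = ∑ i, ∑ j, p i j * (c i j) ^ 2 := by
  have hsq : ∀ y : Fin d → Fin (b + 1), (∑ i, c i (y i)) ^ 2
      = ∑ i, ∑ k, c i (y i) * c k (y k) := by
    intro y; rw [sq, Finset.sum_mul_sum]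
  simp_rw [hsq, Finset.mul_sum]
  rw [Finset.sum_comm]
  refine Finset.sum_congr rfl (fun i _ => ?_)
  rw [Finset.sum_comm]
  rw [Finset.sum_eq_single i]
  · have h := exp_one p hpsum i (fun j => c i j * c i j)
    simpa [sq] using h
  · intro k _ hki
    rw [show (∑ y : Fin d → Fin (b+1), (∏ m, p m (y m)) * (c i (y i) * c k (y k)))
        = (∑ j, p i j * c i j) * (∑ j, p k j * c k j) from exp_two p hpsum (Ne.symm hki) _ _]
    rw [hc i, zero_mul]
  · simp


/-- Whether a tree succeeds on the abbreviated special-pair state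
`y ∈ {0,…,b}^d` (`y i = b` means disagreement at coordinate `i`). -/
def treeHits {b d : ℕ} : BTree b d → (Fin d → Fin (b + 1)) → Bool
  | .leaf, _ => true
  | .node i c, y => if h : (y i : ℕ) < b then treeHits (c ⟨y i, h⟩) y else false

private def qhit {b d : ℕ} (q : Fin d → Fin (b + 1) → ℝ) : BTree b d → ℝ
  | .leaf => 1
  | .node i c => ∑ j : Fin b, q i j.castSucc * qhit q (c j)

private lemma treeHits_update {b d : ℕ} (t : BTree b d) :
    ∀ (E : Finset (Fin d)), validOn E t →
      ∀ i, i ∉ E → ∀ (y : Fin d → Fin (b + 1)) v,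
        treeHits t (Function.update y i v) = treeHits t y := by
  induction t with
  | leaf => intro E _ i _ y v; rfl
  | node i' c ih =>
    intro E hv i hi y v
    obtain ⟨hi'E, hrec⟩ := hv
    have hne : i' ≠ i := fun h => hi (h ▸ hi'E)
    show treeHits (.node i' c) _ = treeHits (.node i' c) _
    simp only [treeHits]
    rw [Function.update_of_ne hne]
    by_cases h : (y i' : ℕ) < b
    · simp only [dif_pos h]
      exact ih _ _ (hrec _) i (fun hm => hi (Finset.mem_of_mem_erase hm)) y v
    · simp only [dif_neg h]

private lemma qhit_le {b d : ℕ} (q : Fin d → Fin (b + 1) → ℝ)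
    (pstar : Fin d → Fin b → ℝ) (N : ℝ) (hN : 1 < N) (l : ℝ) (hl : 0 ≤ l)
    (hps : ∀ i j, 0 < pstar i j) (hq : ∀ i j, 0 ≤ q i j)
    (hqfeas : ∀ i, ∑ j : Fin b, q i j.castSucc / pstar i j ^ l ≤ 1)
    (t : BTree b d) :
    ∀ (w : ℝ), 0 < w → smallLeaves pstar N w t → qhit q t ≤ (w * N) ^ (-l) := by
  have hN0 : (0:ℝ) < N := lt_trans one_pos hN
  induction t with
  | leaf =>
    intro w hw hsl
    have hle : w * N ≤ 1 := by
      have h1 : w ≤ 1 / N := hsl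
      calc w * N ≤ (1 / N) * N := by nlinarith
        _ = 1 := by field_simp
    show (1:ℝ) ≤ _
    exact Real.one_le_rpow_of_pos_of_le_one_of_nonpos (mul_pos hw hN0) hle
      (neg_nonpos.mpr hl)
  | node i c ih =>
    intro w hw hsl
    have hsl' : ∀ j, smallLeaves pstar N (w * pstar i j) (c j) := hsl
    calc (∑ j : Fin b, q i j.castSucc * qhit q (c j))
        ≤ ∑ j : Fin b, q i j.castSucc * ((w * pstar i j * N) ^ (-l)) := by
          refine Finset.sum_le_sum fun j _ => ?_
          exact mul_le_mul_of_nonneg_left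
            (ih j (w * pstar i j) (mul_pos hw (hps i j)) (hsl' j)) (hq i j.castSucc)
      _ = (w * N) ^ (-l) * ∑ j : Fin b, q i j.castSucc / pstar i j ^ l := by
          rw [Finset.mul_sum]
          refine Finset.sum_congr rfl fun j _ => ?_
          have h1 : w * pstar i j * N = (w * N) * pstar i j := by ring
          rw [h1, Real.mul_rpow (by positivity) (hps i j).le, Real.rpow_neg (hps i j).le,
            div_eq_mul_inv]
          ring
      _ ≤ (w * N) ^ (-l) * 1 :=
          mul_le_mul_of_nonneg_left (hqfeas i) (Real.rpow_nonneg (by positivity) _)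
      _ = (w * N) ^ (-l) := mul_one _

private lemma sum_fiber {b d : ℕ} (q : Fin d → Fin (b + 1) → ℝ)
    (hqsum : ∀ i, ∑ j, q i j = 1) (i : Fin d) (v : Fin (b + 1))
    (f : (Fin d → Fin (b + 1)) → ℝ)
    (hf : ∀ y v', f (Function.update y i v') = f y) :
    ∑ y : Fin d → Fin (b + 1), (∏ k, q k (y k)) * (if y i = v then f y else 0)
      = q i v * ∑ y : Fin d → Fin (b + 1), (∏ k, q k (y k)) * f y := by
  set e := Equiv.funSplitAt i (Fin (b + 1)) with he
  have hsymm_i : ∀ (a : Fin (b + 1)) g, e.symm (a, g) i = a := by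
    intro a g
    rw [he, Equiv.funSplitAt_symm_apply, dif_pos rfl]
  have hsymm_ne : ∀ (a : Fin (b + 1)) g k (hk : k ≠ i), e.symm (a, g) k = g ⟨k, hk⟩ := by
    intro a g k hk
    rw [he, Equiv.funSplitAt_symm_apply, dif_neg hk]
  have hupd : ∀ (a a' : Fin (b + 1)) g, e.symm (a, g) = Function.update (e.symm (a', g)) i a := by
    intro a a' g
    funext k
    by_cases hk : k = i
    · subst hk; rw [Function.update_self, hsymm_i]
    · rw [Function.update_of_ne hk, hsymm_ne _ _ _ hk, hsymm_ne _ _ _ hk]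
  have hfconst : ∀ (a a' : Fin (b + 1)) g, f (e.symm (a, g)) = f (e.symm (a', g)) := by
    intro a a' g
    rw [hupd a a' g, hf]
  have hprod : ∀ (a : Fin (b + 1)) g,
      (∏ k, q k (e.symm (a, g) k)) = q i a * ∏ k : {k // k ≠ i}, q k (g k) := by
    intro a g
    rw [← Finset.mul_prod_erase Finset.univ _ (Finset.mem_univ i), hsymm_i]
    congr 1
    rw [Finset.prod_subtype (Finset.univ.erase i)
      (p := fun k => k ≠ i) (fun k => by simp) (fun k => q k (e.symm (a, g) k))]
    refine Finset.prod_congr rfl fun k _ => ?_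
    simp [hsymm_ne _ _ _ k.2]
  rw [← Equiv.sum_comp e.symm
    (fun y => (∏ k, q k (y k)) * (if y i = v then f y else 0)),
    ← Equiv.sum_comp e.symm (fun y => (∏ k, q k (y k)) * f y)]
  rw [Fintype.sum_prod_type, Fintype.sum_prod_type]
  simp only [hprod, hsymm_i]
  have hL : ∀ a : Fin (b + 1), (∑ g : {k // k ≠ i} → Fin (b + 1),
      (q i a * ∏ k : {k // k ≠ i}, q k (g k)) * (if a = v then f (e.symm (a, g)) else 0))
      = (if a = v then q i a else 0) *
        ∑ g : {k // k ≠ i} → Fin (b + 1),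
          (∏ k : {k // k ≠ i}, q k (g k)) * f (e.symm (v, g)) := by
    intro a
    by_cases ha : a = v
    · subst ha
      simp only [if_pos rfl, if_true, Finset.mul_sum]
      exact Finset.sum_congr rfl fun g _ => by ring
    · simp [ha]
  simp only [hL]
  rw [← Finset.sum_mul]
  have h3 : (∑ a : Fin (b + 1), if a = v then q i a else 0) = q i v := by simp
  rw [h3]
  congr 1
  have h4 : ∀ (a : Fin (b + 1)) (g : {k // k ≠ i} → Fin (b + 1)),
      (q i a * ∏ k : {k // k ≠ i}, q k (g k)) * f (e.symm (a, g))
      = q i a * ((∏ k : {k // k ≠ i}, q k (g k)) * f (e.symm (v, g))) := by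
    intro a g; rw [hfconst a v g]; ring
  simp only [h4]
  simp only [← Finset.mul_sum]
  rw [← Finset.sum_mul, hqsum i, one_mul]

private lemma hit_le_qhit {b d : ℕ} (q : Fin d → Fin (b + 1) → ℝ)
    (hq : ∀ i j, 0 ≤ q i j) (hqsum : ∀ i, ∑ j, q i j = 1) (t : BTree b d) :
    ∀ (E : Finset (Fin d)), validOn E t →
      (∑ y : Fin d → Fin (b + 1), (∏ k, q k (y k)) * (if treeHits t y then (1:ℝ) else 0))
        ≤ qhit q t := by
  induction t with
  | leaf =>
    intro E _
    have : ∀ y : Fin d → Fin (b + 1),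
        (∏ k, q k (y k)) * (if treeHits BTree.leaf y then (1:ℝ) else 0)
        = ∏ k, q k (y k) := by
      intro y; simp [treeHits]
    simp only [this]
    rw [sum_pi_prod q]
    have : ∀ i, (∑ j, q i j) = 1 := hqsum
    simp only [this, Finset.prod_const_one]
    show (1:ℝ) ≤ qhit q BTree.leaf
    exact le_refl _
  | node i c ih =>
    intro E hv
    obtain ⟨hiE, hrec⟩ := hv
    have hind : ∀ y : Fin d → Fin (b + 1),
        (if treeHits (BTree.node i c) y then (1:ℝ) else 0)
        = ∑ j : Fin b, (if y i = j.castSucc then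
            (if treeHits (c j) y then (1:ℝ) else 0) else 0) := by
      intro y
      by_cases h : (y i : ℕ) < b
      · have hy : y i = (⟨(y i : ℕ), h⟩ : Fin b).castSucc := by
          apply Fin.ext; simp
        rw [Finset.sum_eq_single (⟨(y i : ℕ), h⟩ : Fin b)]
        · rw [if_pos hy]
          show (if treeHits (BTree.node i c) y then (1:ℝ) else 0) = _
          simp only [treeHits, dif_pos h]
        · intro j _ hj
          rw [if_neg]
          intro hyj
          apply hj
          apply Fin.ext
          have := congrArg Fin.val hyj
          simpa using this.symm
        · intro h'; exact absurd (Finset.mem_univ _) h'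
      · show (if treeHits (BTree.node i c) y then (1:ℝ) else 0) = _
        simp only [treeHits, dif_neg h, if_false]
        symm
        apply Finset.sum_eq_zero
        intro j _
        rw [if_neg]
        intro hyj
        apply h
        rw [hyj]
        simpa using j.isLt
    simp only [hind, Finset.mul_sum]
    rw [Finset.sum_comm]
    have hstep : ∀ j : Fin b,
        (∑ y : Fin d → Fin (b + 1), (∏ k, q k (y k)) *
          (if y i = j.castSucc then (if treeHits (c j) y then (1:ℝ) else 0) else 0))
        ≤ q i j.castSucc * qhit q (c j) := by
      intro j
      rw [sum_fiber q hqsum i j.castSucc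
        (fun y => if treeHits (c j) y then (1:ℝ) else 0)
        (fun y v' => by
          show (if treeHits (c j) (Function.update y i v') then (1:ℝ) else 0)
            = (if treeHits (c j) y then (1:ℝ) else 0)
          rw [treeHits_update (c j) (E.erase i) (hrec j) i (Finset.notMem_erase i E) y v'])]
      exact mul_le_mul_of_nonneg_left (ih j (E.erase i) (hrec j)) (hq i j.castSucc)
    calc (∑ j : Fin b, ∑ y : Fin d → Fin (b + 1), (∏ k, q k (y k)) *
          (if y i = j.castSucc then (if treeHits (c j) y then (1:ℝ) else 0) else 0))
        ≤ ∑ j : Fin b, q i j.castSucc * qhit q (c j) :=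
          Finset.sum_le_sum fun j _ => hstep j
      _ = qhit q (BTree.node i c) := rfl
/-- If a bucketing forest of `T` trees, all of whose leaves have probability at
most `1/N`, has success probability `S > 0`, then for every `λ ≥ 0` and every
feasible `q` (in particular the minimizing `q` of the bucketing forest
information) we have
`ln T ≥ λ ln N + ln(S/2) − √((4/S) Σ_i V(P_i,λ)) − Σ_i F(P_i,λ)`. -/
theorem bucketing_forest_upper {b d T : ℕ}
    (p : Fin d → Fin (b + 1) → ℝ) (pstar : Fin d → Fin b → ℝ)
    (hp : ∀ i j, 0 ≤ p i j) (hpsum : ∀ i, ∑ j, p i j = 1)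
    (hps : ∀ i j, pstar i j ∈ Set.Ioo (0 : ℝ) 1)
    (hple : ∀ i (j : Fin b), p i j.castSucc ≤ pstar i j)
    (N : ℝ) (hN : 1 < N) (trees : Fin T → BTree b d)
    (hvalid : ∀ t, validOn Finset.univ (trees t))
    (hsmall : ∀ t, smallLeaves pstar N 1 (trees t))
    (S : ℝ)
    (hSdef : S = ∑ y : Fin d → Fin (b + 1), (∏ i, p i (y i)) *
        (if ∃ t, treeHits (trees t) y then (1 : ℝ) else 0))
    (hS : 0 < S) (l : ℝ) (hl : 0 ≤ l)
    (q : Fin d → Fin (b + 1) → ℝ) (hq : ∀ i j, 0 < q i j)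
    (hqsum : ∀ i, ∑ j, q i j = 1)
    (hqfeas : ∀ i, ∑ j : Fin b, q i j.castSucc / pstar i j ^ l ≤ 1) :
    Real.log T ≥ l * Real.log N + Real.log (S / 2)
      - Real.sqrt ((4 / S) * ∑ i, ∑ j, p i j *
          (Real.log (p i j / q i j) - ∑ k, p i k * Real.log (p i k / q i k)) ^ 2)
      - ∑ i, ∑ j, p i j * Real.log (p i j / q i j) := by
  classical
  have hN0 : (0 : ℝ) < N := lt_trans one_pos hN
  set Ft := ∑ i, ∑ j, p i j * Real.log (p i j / q i j) with hFt
  set Vt := ∑ i, ∑ j, p i j *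
      (Real.log (p i j / q i j) - ∑ k, p i k * Real.log (p i k / q i k)) ^ 2 with hVt
  set t0 := Real.sqrt ((4 / S) * Vt) with ht0
  have hVt0 : 0 ≤ Vt := by
    rw [hVt]
    refine Finset.sum_nonneg fun i _ => Finset.sum_nonneg fun j _ =>
      mul_nonneg (hp i j) (sq_nonneg _)
  have ht00 : 0 ≤ t0 := Real.sqrt_nonneg _
  have hwp0 : ∀ y : Fin d → Fin (b + 1), 0 ≤ ∏ m, p m (y m) :=
    fun y => Finset.prod_nonneg fun m _ => hp m (y m)
  -- second moment
  have hmoment : ∑ y : Fin d → Fin (b + 1), (∏ m, p m (y m)) *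
      ((∑ i, Real.log (p i (y i) / q i (y i))) - Ft) ^ 2 = Vt := by
    have hc : ∀ i, ∑ j, p i j *
        (Real.log (p i j / q i j) - ∑ k, p i k * Real.log (p i k / q i k)) = 0 := by
      intro i
      simp only [mul_sub]
      rw [Finset.sum_sub_distrib, ← Finset.sum_mul, hpsum i, one_mul, sub_self]
    have hv := var_sum p hpsum
      (fun i j => Real.log (p i j / q i j) - ∑ k, p i k * Real.log (p i k / q i k)) hc
    rw [hVt, ← hv]
    refine Finset.sum_congr rfl fun y _ => ?_
    congr 1
    rw [Finset.sum_sub_distrib, hFt]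
  -- Chebyshev / Markov bound on the bad set
  have hbadsub : ∑ y ∈ Finset.univ.filter
      (fun y : Fin d → Fin (b + 1) =>
        Ft + t0 < ∑ i, Real.log (p i (y i) / q i (y i))),
      (∏ m, p m (y m)) ≤ S / 2 := by
    by_cases hV : Vt = 0
    · have ht0z : t0 = 0 := by rw [ht0, hV, mul_zero, Real.sqrt_zero]
      have hz : ∀ y : Fin d → Fin (b + 1), (∏ m, p m (y m)) *
          ((∑ i, Real.log (p i (y i) / q i (y i))) - Ft) ^ 2 = 0 := by
        have hnn : ∀ y ∈ (Finset.univ : Finset (Fin d → Fin (b + 1))),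
            0 ≤ (∏ m, p m (y m)) *
              ((∑ i, Real.log (p i (y i) / q i (y i))) - Ft) ^ 2 :=
          fun y _ => mul_nonneg (hwp0 y) (sq_nonneg _)
        intro y
        exact (Finset.sum_eq_zero_iff_of_nonneg hnn).mp (by rw [hmoment, hV]) y
          (Finset.mem_univ y)
      have : ∑ y ∈ Finset.univ.filter
          (fun y : Fin d → Fin (b + 1) =>
            Ft + t0 < ∑ i, Real.log (p i (y i) / q i (y i))),
          (∏ m, p m (y m)) = 0 := by
        refine Finset.sum_eq_zero fun y hy => ?_
        have hLy := (Finset.mem_filter.mp hy).2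
        rw [ht0z, add_zero] at hLy
        have hsq : 0 < ((∑ i, Real.log (p i (y i) / q i (y i))) - Ft) ^ 2 := by
          have : 0 < (∑ i, Real.log (p i (y i) / q i (y i))) - Ft := by linarith
          positivity
        have := hz y
        rcases mul_eq_zero.mp this with h | h
        · exact h
        · exact absurd h (ne_of_gt hsq)
      rw [this]
      linarith
    · have hVpos : 0 < Vt := lt_of_le_of_ne hVt0 (Ne.symm hV)
      have ht0sq : t0 ^ 2 = (4 / S) * Vt := by
        rw [ht0]; exact Real.sq_sqrt (by positivity)
      have hstep : (∑ y ∈ Finset.univ.filter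
          (fun y : Fin d → Fin (b + 1) =>
            Ft + t0 < ∑ i, Real.log (p i (y i) / q i (y i))),
          (∏ m, p m (y m))) * t0 ^ 2 ≤ Vt := by
        rw [Finset.sum_mul]
        calc (∑ y ∈ Finset.univ.filter
            (fun y : Fin d → Fin (b + 1) =>
              Ft + t0 < ∑ i, Real.log (p i (y i) / q i (y i))),
            (∏ m, p m (y m)) * t0 ^ 2)
            ≤ ∑ y ∈ Finset.univ.filter
              (fun y : Fin d → Fin (b + 1) =>
                Ft + t0 < ∑ i, Real.log (p i (y i) / q i (y i))),
              (∏ m, p m (y m)) *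
                ((∑ i, Real.log (p i (y i) / q i (y i))) - Ft) ^ 2 := by
              refine Finset.sum_le_sum fun y hy => ?_
              have hLy := (Finset.mem_filter.mp hy).2
              refine mul_le_mul_of_nonneg_left ?_ (hwp0 y)
              refine pow_le_pow_left₀ ht00 ?_ 2
              linarith
          _ ≤ ∑ y : Fin d → Fin (b + 1), (∏ m, p m (y m)) *
                ((∑ i, Real.log (p i (y i) / q i (y i))) - Ft) ^ 2 := by
              refine Finset.sum_le_sum_of_subset_of_nonneg
                (Finset.filter_subset _ _) fun y _ _ =>
                mul_nonneg (hwp0 y) (sq_nonneg _)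
          _ = Vt := hmoment
      set X := ∑ y ∈ Finset.univ.filter
          (fun y : Fin d → Fin (b + 1) =>
            Ft + t0 < ∑ i, Real.log (p i (y i) / q i (y i))),
          (∏ m, p m (y m)) with hX
      have h1 : X * ((4 / S) * Vt) ≤ Vt := by rw [← ht0sq]; exact hstep
      have h2 : X * (4 * Vt) ≤ S * Vt := by
        have hS' : S ≠ 0 := ne_of_gt hS
        have h3 := mul_le_mul_of_nonneg_left h1 hS.le
        calc X * (4 * Vt) = S * (X * ((4 / S) * Vt)) := by field_simp
          _ ≤ S * Vt := h3
      nlinarith [h2, hVpos, hS]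
  -- split success mass into good and bad parts
  have hqp0 : ∀ y : Fin d → Fin (b + 1), 0 ≤ ∏ m, q m (y m) :=
    fun y => Finset.prod_nonneg fun m _ => (hq m (y m)).le
  have hgood : S / 2 ≤ ∑ y : Fin d → Fin (b + 1),
      (if (∃ t, treeHits (trees t) y) ∧
          ¬ (Ft + t0 < ∑ i, Real.log (p i (y i) / q i (y i))) then
        (∏ m, p m (y m)) else 0) := by
    have hsplit : ∀ y : Fin d → Fin (b + 1),
        (∏ m, p m (y m)) * (if ∃ t, treeHits (trees t) y then (1 : ℝ) else 0)
        = (if (∃ t, treeHits (trees t) y) ∧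
              ¬ (Ft + t0 < ∑ i, Real.log (p i (y i) / q i (y i))) then
            (∏ m, p m (y m)) else 0)
          + (if (∃ t, treeHits (trees t) y) ∧
              (Ft + t0 < ∑ i, Real.log (p i (y i) / q i (y i))) then
            (∏ m, p m (y m)) else 0) := by
      intro y
      by_cases h1 : ∃ t, treeHits (trees t) y <;>
        by_cases h2 : Ft + t0 < ∑ i, Real.log (p i (y i) / q i (y i)) <;>
        simp [h1, h2]
    have hSsum : S = (∑ y : Fin d → Fin (b + 1),
        (if (∃ t, treeHits (trees t) y) ∧
            ¬ (Ft + t0 < ∑ i, Real.log (p i (y i) / q i (y i))) then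
          (∏ m, p m (y m)) else 0))
        + ∑ y : Fin d → Fin (b + 1),
        (if (∃ t, treeHits (trees t) y) ∧
            (Ft + t0 < ∑ i, Real.log (p i (y i) / q i (y i))) then
          (∏ m, p m (y m)) else 0) := by
      rw [hSdef]
      simp_rw [hsplit]
      rw [Finset.sum_add_distrib]
    have hbad2 : (∑ y : Fin d → Fin (b + 1),
        (if (∃ t, treeHits (trees t) y) ∧
            (Ft + t0 < ∑ i, Real.log (p i (y i) / q i (y i))) then
          (∏ m, p m (y m)) else 0)) ≤ S / 2 := by
      refine le_trans ?_ hbadsub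
      rw [Finset.sum_filter]
      refine Finset.sum_le_sum fun y _ => ?_
      by_cases h1 : ∃ t, treeHits (trees t) y <;>
        by_cases h2 : Ft + t0 < ∑ i, Real.log (p i (y i) / q i (y i)) <;>
        simp [h1, h2, hwp0 y]
    linarith
  -- lower bound on Q-success
  have hql : Real.exp (-(Ft + t0)) * (S / 2) ≤ ∑ y : Fin d → Fin (b + 1),
      (∏ m, q m (y m)) * (if ∃ t, treeHits (trees t) y then (1 : ℝ) else 0) := by
    have hpt : ∀ y : Fin d → Fin (b + 1),
        Real.exp (-(Ft + t0)) *
          (if (∃ t, treeHits (trees t) y) ∧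
              ¬ (Ft + t0 < ∑ i, Real.log (p i (y i) / q i (y i))) then
            (∏ m, p m (y m)) else 0)
        ≤ (∏ m, q m (y m)) * (if ∃ t, treeHits (trees t) y then (1 : ℝ) else 0) := by
      intro y
      by_cases hcond : (∃ t, treeHits (trees t) y) ∧
          ¬ (Ft + t0 < ∑ i, Real.log (p i (y i) / q i (y i)))
      · rw [if_pos hcond, if_pos hcond.1, mul_one]
        by_cases hwz : (∏ m, p m (y m)) = 0
        · rw [hwz, mul_zero]; exact hqp0 y
        · have hppos : ∀ m, 0 < p m (y m) := by
            intro m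
            rcases lt_or_eq_of_le (hp m (y m)) with h | h
            · exact h
            · exact absurd (Finset.prod_eq_zero (Finset.mem_univ m) h.symm) hwz
          have hwq : (∏ m, q m (y m)) = (∏ m, p m (y m)) *
              Real.exp (-(∑ i, Real.log (p i (y i) / q i (y i)))) := by
            rw [← Finset.sum_neg_distrib, Real.exp_sum, ← Finset.prod_mul_distrib]
            refine Finset.prod_congr rfl fun m _ => ?_
            rw [Real.exp_neg, Real.exp_log (div_pos (hppos m) (hq m (y m)))]
            field_simp
            rw [mul_div_assoc, div_self (hppos m).ne', mul_one]
          rw [hwq, mul_comm (Real.exp (-(Ft + t0)))]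
          refine mul_le_mul_of_nonneg_left ?_ (hwp0 y)
          refine Real.exp_le_exp.mpr ?_
          have := hcond.2
          push_neg at this
          linarith
      · rw [if_neg hcond, mul_zero]
        refine mul_nonneg (hqp0 y) ?_
        by_cases h1 : ∃ t, treeHits (trees t) y <;> simp [h1]
    calc Real.exp (-(Ft + t0)) * (S / 2)
        ≤ Real.exp (-(Ft + t0)) * ∑ y : Fin d → Fin (b + 1),
          (if (∃ t, treeHits (trees t) y) ∧
              ¬ (Ft + t0 < ∑ i, Real.log (p i (y i) / q i (y i))) then
            (∏ m, p m (y m)) else 0) :=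
          mul_le_mul_of_nonneg_left hgood (Real.exp_pos _).le
      _ = ∑ y : Fin d → Fin (b + 1), Real.exp (-(Ft + t0)) *
          (if (∃ t, treeHits (trees t) y) ∧
              ¬ (Ft + t0 < ∑ i, Real.log (p i (y i) / q i (y i))) then
            (∏ m, p m (y m)) else 0) := Finset.mul_sum _ _ _
      _ ≤ _ := Finset.sum_le_sum fun y _ => hpt y
  -- upper bound on Q-success
  have hqu : (∑ y : Fin d → Fin (b + 1),
      (∏ m, q m (y m)) * (if ∃ t, treeHits (trees t) y then (1 : ℝ) else 0))
      ≤ (T : ℝ) * N ^ (-l) := by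
    calc (∑ y : Fin d → Fin (b + 1),
        (∏ m, q m (y m)) * (if ∃ t, treeHits (trees t) y then (1 : ℝ) else 0))
        ≤ ∑ y : Fin d → Fin (b + 1), ∑ t,
          (∏ m, q m (y m)) * (if treeHits (trees t) y then (1 : ℝ) else 0) := by
          refine Finset.sum_le_sum fun y _ => ?_
          by_cases h1 : ∃ t, treeHits (trees t) y
          · rw [if_pos h1, mul_one]
            obtain ⟨t', ht'⟩ := h1
            have := Finset.single_le_sum
              (f := fun t => (∏ m, q m (y m)) * (if treeHits (trees t) y then (1 : ℝ) else 0))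
              (fun t _ => mul_nonneg (hqp0 y) (by by_cases h : treeHits (trees t) y <;> simp [h]))
              (Finset.mem_univ t')
            simp only [ht', if_true, mul_one] at this
            exact this
          · rw [if_neg h1, mul_zero]
            exact Finset.sum_nonneg fun t _ =>
              mul_nonneg (hqp0 y) (by by_cases h : treeHits (trees t) y <;> simp [h])
      _ = ∑ t, ∑ y : Fin d → Fin (b + 1),
          (∏ m, q m (y m)) * (if treeHits (trees t) y then (1 : ℝ) else 0) :=
          Finset.sum_comm
      _ ≤ ∑ _t : Fin T, (N : ℝ) ^ (-l) := by
          refine Finset.sum_le_sum fun t _ => ?_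
          refine le_trans (hit_le_qhit q (fun i j => (hq i j).le) hqsum (trees t)
            Finset.univ (hvalid t)) ?_
          have := qhit_le q pstar N hN l hl (fun i j => (hps i j).1)
            (fun i j => (hq i j).le) hqfeas (trees t) 1 one_pos (hsmall t)
          rwa [one_mul] at this
      _ = (T : ℝ) * N ^ (-l) := by
          rw [Finset.sum_const, Finset.card_univ, Fintype.card_fin, nsmul_eq_mul]
  -- T is positive
  have hT : 0 < T := by
    rcases Nat.eq_zero_or_pos T with h | h
    · subst h
      rw [hSdef] at hS
      simp only [IsEmpty.exists_iff, if_false, mul_zero, Finset.sum_const_zero] at hS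
      exact absurd hS (lt_irrefl 0)
    · exact h
  -- conclude
  have hfinal : Real.exp (-(Ft + t0)) * (S / 2) ≤ (T : ℝ) * N ^ (-l) :=
    le_trans hql hqu
  have hlog := Real.log_le_log (by positivity) hfinal
  rw [Real.log_mul (Real.exp_ne_zero _) (by positivity), Real.log_exp,
    Real.log_mul (by exact_mod_cast hT.ne') (Real.rpow_pos_of_pos hN0 _).ne',
    Real.log_rpow hN0] at hlog
  linarith
end
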